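/- Let (X, α) be a partial dynamical system with Δ₋₁ open. Then every closed subset Ṽ ⊆ X̃ is uniquely determined by its sections {Vₙ}_{n∈ℕ}: Ṽ = (V₀ × (V₁ ∪ {0}) × ... × (Vₙ ∪ {0}) × ...) ∩ X̃. -/

import Mathlib

open Set

variable {X : Type*}

/-- `pdsDom α Δ n` is the domain `Δₙ` of the `n`-th iterate of the
partial map `α : Δ → X`. -/
def pdsDom (α : X → X) (Δ : Set X) : ℕ → Set X
  | 0 => Set.univ
  | n + 1 => Δ ∩ α ⁻¹' pdsDom α Δ n

/-- The point `0` adjoined to `X`: we realize `X ∪ {0}` as `X ⊕ Unit`,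
with `0 := Sum.inr ()`. -/
abbrev pdsZero (X : Type*) : X ⊕ Unit := Sum.inr ()

/-- The set `X_∞` of infinite anti-orbits of `(X, α)`, inside the
product `∏_{n ∈ ℕ} (X ∪ {0})`. -/
def XInf (α : X → X) (Δ : Set X) : Set (ℕ → X ⊕ Unit) :=
  {p | (∀ n, ∃ x, p n = Sum.inl x ∧ x ∈ pdsDom α Δ n) ∧
       (∀ n x, p (n + 1) = Sum.inl x → x ∈ Δ ∧ p n = Sum.inl (α x))}

/-- The set `X_N` of anti-orbits of length exactly `N`: sequences
`(x₀, …, x_N, 0, 0, …)` with `xₙ ∈ Δₙ`, `α xₙ = x_{n-1}` and `x_N ∉ α(Δ)`. -/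
def XN (α : X → X) (Δ : Set X) (N : ℕ) : Set (ℕ → X ⊕ Unit) :=
  {p | (∀ n ≤ N, ∃ x, p n = Sum.inl x ∧ x ∈ pdsDom α Δ n) ∧
       (∀ n, N < n → p n = pdsZero X) ∧
       (∀ n x, p (n + 1) = Sum.inl x → x ∈ Δ ∧ p n = Sum.inl (α x)) ∧
       (∀ x, p N = Sum.inl x → x ∉ α '' Δ)}

/-- The `α`-extension `X̃ = ⋃_N X_N ∪ X_∞` of `X`. -/
def Xtilde (α : X → X) (Δ : Set X) : Set (ℕ → X ⊕ Unit) :=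
  (⋃ N, XN α Δ N) ∪ XInf α Δ

/-- The map `α̃ : (x₀, x₁, …) ↦ (α x₀, x₀, x₁, …)` on sequences. -/
def tShift (α : X → X) : (ℕ → X ⊕ Unit) → (ℕ → X ⊕ Unit) :=
  fun p n => Nat.casesOn n (Sum.map α id (p 0)) fun k => p k

/-- The backwards shift `(x₀, x₁, x₂, …) ↦ (x₁, x₂, …)`. -/
def bShift : (ℕ → X ⊕ Unit) → (ℕ → X ⊕ Unit) := fun p n => p (n + 1)

/-- The domain `Δ̃₁ = {x̃ ∈ X̃ : x₀ ∈ Δ₁}` of `α̃`. -/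
def tDelta1 (α : X → X) (Δ : Set X) : Set (ℕ → X ⊕ Unit) :=
  {p | p ∈ Xtilde α Δ ∧ ∃ x ∈ Δ, p 0 = Sum.inl x}

/-- The image `Δ̃₋₁ = {x̃ ∈ X̃ : x₁ ≠ 0}` of `α̃`. -/
def tDeltaM1 (α : X → X) (Δ : Set X) : Set (ℕ → X ⊕ Unit) :=
  {p | p ∈ Xtilde α Δ ∧ p 1 ≠ pdsZero X}

/-- `V` is invariant under the partial map `α : Δ → X`:
`αⁿ(V ∩ Δₙ) = V ∩ Δ₋ₙ` for all `n ∈ ℕ`. -/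
def PdsInvariant (α : X → X) (Δ : Set X) (V : Set X) : Prop :=
  ∀ n : ℕ, α^[n] '' (V ∩ pdsDom α Δ n) = V ∩ α^[n] '' pdsDom α Δ n

/-- The set `Fₙ = {x ∈ Δₙ : αⁿ x = x}` of `n`-periodic points. -/
def pdsFix (α : X → X) (Δ : Set X) (n : ℕ) : Set X :=
  {x | x ∈ pdsDom α Δ n ∧ α^[n] x = x}

/-- Topological freedom of the partial map `α : Δ → X`: for every `n > 0`,
every nonempty relatively open subset of `Fₙ` contains a point `x` with
`|α⁻ᵏ(x)| > 1` for some `1 ≤ k ≤ n`. -/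
def TopFree [TopologicalSpace X] (α : X → X) (Δ : Set X) : Prop :=
  ∀ n : ℕ, 0 < n → ∀ W : Set X, IsOpen W → (W ∩ pdsFix α Δ n).Nonempty →
    ∃ x ∈ W ∩ pdsFix α Δ n, ∃ k, 1 ≤ k ∧ k ≤ n ∧
      ∃ y z, y ∈ pdsDom α Δ k ∧ z ∈ pdsDom α Δ k ∧
        α^[k] y = x ∧ α^[k] z = x ∧ y ≠ z

lemma chain_of_mem_Xtilde {α : X → X} {Δ : Set X} {p : ℕ → X ⊕ Unit}
    (hp : p ∈ Xtilde α Δ) :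
    ∀ n x, p (n + 1) = Sum.inl x → x ∈ Δ ∧ p n = Sum.inl (α x) := by
  rcases hp with hp | hp
  · rcases Set.mem_iUnion.1 hp with ⟨N, h⟩
    exact h.2.2.1
  · exact hp.2

lemma agree_below {α : X → X} {Δ : Set X} {p q : ℕ → X ⊕ Unit}
    (hp : ∀ n x, p (n + 1) = Sum.inl x → x ∈ Δ ∧ p n = Sum.inl (α x))
    (hq : ∀ n x, q (n + 1) = Sum.inl x → x ∈ Δ ∧ q n = Sum.inl (α x))
    {n : ℕ} {x : X} (hpn : p n = Sum.inl x) (hqn : q n = Sum.inl x) :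
    ∀ k ≤ n, p k = q k := by
  have key : ∀ j m, m + j = n → ∃ y, p m = Sum.inl y ∧ q m = Sum.inl y := by
    intro j
    induction j with
    | zero => intro m hm; rw [Nat.add_zero] at hm; subst hm; exact ⟨x, hpn, hqn⟩
    | succ j ih =>
        intro m hm
        obtain ⟨y, hpy, hqy⟩ := ih (m + 1) (by omega)
        exact ⟨α y, (hp m y hpy).2, (hq m y hqy).2⟩
  intro k hk
  obtain ⟨y, hpy, hqy⟩ := key (n - k) k (by omega)
  rw [hpy, hqy]

/-- If `Δ₋₁` is open, every closed subset `Ṽ ⊆ X̃` is uniquely determined by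
its sections `Vₙ = Φₙ(Ṽ ∩ Δ̃₋ₙ)`: `Ṽ = (V₀ × (V₁ ∪ {0}) × ⋯) ∩ X̃`. -/
theorem closed_subset_eq_of_sections {X : Type*} [TopologicalSpace X] [CompactSpace X]
    [T2Space X] (Δ : Set X) (hΔ : IsClopen Δ) (α : X → X) (hα : ContinuousOn α Δ)
    (hopen : IsOpen (α '' Δ)) (V : Set (ℕ → X ⊕ Unit)) (hV : V ⊆ Xtilde α Δ)
    (hclosed : IsClosed (Subtype.val ⁻¹' V : Set ↥(Xtilde α Δ))) :
    V = {p | p ∈ Xtilde α Δ ∧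
          ∀ n x, p n = Sum.inl x → x ∈ {w | ∃ q ∈ V, q n = Sum.inl w}} := by
  ext p
  constructor
  · intro hpV
    exact ⟨hV hpV, fun n x h => ⟨p, hpV, h⟩⟩
  · rintro ⟨hpX, hsec⟩
    have hpchain := chain_of_mem_Xtilde hpX
    rcases hpX with hpN | hpInf
    · -- finite orbit case: p ∈ X_N for some N, then p equals some q ∈ V
      rcases Set.mem_iUnion.1 hpN with ⟨N, hN⟩
      obtain ⟨x, hpx, _⟩ := hN.1 N le_rfl
      obtain ⟨q, hqV, hqx⟩ := hsec N x hpx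
      have hqchain := chain_of_mem_Xtilde (hV hqV)
      have hagree := agree_below hpchain hqchain hpx hqx
      have hqzero : ∀ j, q (N + 1 + j) = pdsZero X := by
        intro j
        induction j with
        | zero =>
            cases h : q (N + 1) with
            | inl y =>
                obtain ⟨hyΔ, hqN⟩ := hqchain N y h
                rw [hqx] at hqN
                exact absurd ⟨y, hyΔ, (Sum.inl.inj hqN).symm⟩ (hN.2.2.2 x hpx)
            | inr u => cases u; rfl
        | succ j ih =>
            cases h : q (N + 1 + j + 1) with
            | inl y =>
                have := (hqchain (N + 1 + j) y h).2
                rw [ih] at this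
                exact absurd this (by simp [pdsZero])
            | inr u => cases u; rfl
      have : p = q := by
        funext k
        rcases le_or_gt k N with hk | hk
        · exact hagree k hk
        · rw [hN.2.1 k hk]
          have := hqzero (k - N - 1)
          rw [show N + 1 + (k - N - 1) = k by omega] at this
          exact this.symm
      rwa [this]
    · -- infinite orbit case: approximate p by elements of V
      have hpX' : p ∈ Xtilde α Δ := Or.inr hpInf
      choose xs hxs _ using hpInf.1
      have hQ : ∀ n, ∃ q ∈ V, q n = Sum.inl (xs n) := fun n => hsec n (xs n) (hxs n)
      choose Q hQV hQx using hQ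
      have hagree : ∀ n k, k ≤ n → Q n k = p k := fun n k hk =>
        agree_below (chain_of_mem_Xtilde (hV (hQV n))) hpchain (hQx n) (hxs n) k hk
      have htend : Filter.Tendsto (fun n => (⟨Q n, hV (hQV n)⟩ : ↥(Xtilde α Δ)))
          Filter.atTop (nhds ⟨p, hpX'⟩) := by
        rw [tendsto_subtype_rng]
        rw [tendsto_pi_nhds]
        intro k
        apply Filter.Tendsto.congr' (f₁ := fun _ => p k)
        · exact Filter.eventually_atTop.2 ⟨k, fun n hn => (hagree n k hn).symm⟩
        · exact tendsto_const_nhds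
      have := hclosed.mem_of_tendsto htend
        (Filter.Eventually.of_forall fun n => hQV n)
      exact this
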